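/- Let f and g be probability density functions of two Gaussian distributions on ℝ with the same variance σ² > 0 and means μ₁, μ₂ satisfying |μ₁ - μ₂| ≤ Δ. If σ² ≥ 2 log(1.25/δ) · (Δ/ε)² for ε ∈ (0,1) and δ ∈ (0,1), then for every measurable set T ⊆ ℝ, the Gaussian measure with mean μ₁ assigns to T probability at most exp(ε) times the probability assigned by the Gaussian measure with mean μ₂, plus δ. -/

import Mathlib

open MeasureTheory ProbabilityTheory Real
open scoped ENNReal NNReal

lemma gauss_symm (μ : ℝ) (v : NNReal) {T : Set ℝ} (hT : MeasurableSet T) :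
    gaussianReal μ v T = gaussianReal (-μ) v ((fun x : ℝ => -x) ⁻¹' T) := by
  have h := gaussianReal_map_const_mul (μ := μ) (v := v) (-1 : ℝ)
  simp only [neg_one_mul, neg_one_sq] at h
  have hv2 : (⟨(1:ℝ), by norm_num⟩ : NNReal) = 1 := rfl
  replace h : Measure.map (fun x : ℝ => -x) (gaussianReal μ v) = gaussianReal (-μ) v := by
    rw [h]; congr 1; ext; simp
  rw [← h, Measure.map_apply (by fun_prop) (hT.preimage (by fun_prop))]
  congr 1
  ext x; simp

lemma gauss_trans (μ y : ℝ) (v : NNReal) {T : Set ℝ} (hT : MeasurableSet T) :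
    gaussianReal (μ + y) v T = gaussianReal μ v ((fun x : ℝ => x + y) ⁻¹' T) := by
  rw [← gaussianReal_map_add_const y, Measure.map_apply (by fun_prop) hT]

lemma gauss_Ioi_half (μ : ℝ) {v : NNReal} (hv : v ≠ 0) :
    gaussianReal μ v (Set.Ioi μ) = 1/2 := by
  have hsym : gaussianReal μ v (Set.Ioi μ) = gaussianReal μ v (Set.Iio μ) := by
    rw [gauss_symm μ v measurableSet_Ioi]
    have hpre : (fun x : ℝ => -x) ⁻¹' Set.Ioi μ = Set.Iio (-μ) := by
      ext x; simp [Set.mem_Iio, lt_neg]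
    rw [hpre]
    have h2 : μ = -μ + (2*μ) := by ring
    conv_rhs => rw [h2]
    rw [gauss_trans (-μ) (2*μ) v measurableSet_Iio]
    congr 1
    ext x
    simp only [Set.mem_preimage, Set.mem_Iio]
    constructor <;> intro h <;> linarith
  have hsing : gaussianReal μ v {μ} = 0 :=
    gaussianReal_absolutelyContinuous μ hv (Real.volume_singleton)
  have hcompl : gaussianReal μ v ({μ}ᶜ) = 1 := by
    rw [measure_compl (measurableSet_singleton μ) (measure_ne_top _ _), hsing]
    simp
  have hunion : ({μ}ᶜ : Set ℝ) = Set.Iio μ ∪ Set.Ioi μ := by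
    ext x
    simp only [Set.mem_compl_iff, Set.mem_singleton_iff, Set.mem_union, Set.mem_Iio, Set.mem_Ioi]
    exact ne_iff_lt_or_gt
  rw [hunion, measure_union (((Set.Iic_disjoint_Ioi le_rfl).mono_left Set.Iio_subset_Iic_self)) measurableSet_Ioi, ← hsym,
    ← two_mul] at hcompl
  rw [ENNReal.eq_div_iff two_ne_zero ENNReal.ofNat_ne_top]
  exact hcompl

lemma half_ennreal : (1/2 : ℝ≥0∞) = ENNReal.ofReal (1/2) := by
  rw [ENNReal.ofReal_div_of_pos (by norm_num)]
  norm_num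

lemma gauss_tail (μ : ℝ) {v : NNReal} (hv : v ≠ 0) {s : ℝ} (hs : 0 ≤ s) :
    gaussianReal μ v (Set.Ioi (μ + s)) ≤ ENNReal.ofReal (Real.exp (-(s^2)/(2*v)) * (1/2)) := by
  have hvpos : (0:ℝ) < v := lt_of_le_of_ne v.coe_nonneg (by exact_mod_cast (Ne.symm hv))
  have hpt : ∀ x ∈ Set.Ioi (μ + s), gaussianPDF μ v x ≤
      ENNReal.ofReal (Real.exp (-(s^2)/(2*(v:ℝ)))) * gaussianPDF (μ+s) v x := by
    intro x hx
    rw [gaussianPDF, gaussianPDF, ← ENNReal.ofReal_mul (Real.exp_nonneg _)]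
    apply ENNReal.ofReal_le_ofReal
    have hx' : μ + s < x := hx
    have hexp : rexp (-(x-μ)^2/(2*(v:ℝ))) ≤
        rexp (-(s^2)/(2*(v:ℝ))) * rexp (-(x-(μ+s))^2/(2*(v:ℝ))) := by
      rw [← Real.exp_add]
      apply Real.exp_le_exp.mpr
      rw [← add_div, div_le_div_iff₀ (by positivity) (by positivity)]
      nlinarith [mul_nonneg (mul_nonneg hs (by linarith : (0:ℝ) ≤ x - μ - s)) hvpos.le]
    simp only [gaussianPDFReal]
    have hC : (0:ℝ) ≤ (Real.sqrt (2*π*(v:ℝ)))⁻¹ := by positivity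
    nlinarith [mul_le_mul_of_nonneg_left hexp hC]
  calc gaussianReal μ v (Set.Ioi (μ + s))
      = ∫⁻ x in Set.Ioi (μ+s), gaussianPDF μ v x := gaussianReal_apply μ hv _
    _ ≤ ∫⁻ x in Set.Ioi (μ+s), ENNReal.ofReal (Real.exp (-(s^2)/(2*(v:ℝ)))) * gaussianPDF (μ+s) v x :=
        setLIntegral_mono ((measurable_gaussianPDF _ _).const_mul _) hpt
    _ = ENNReal.ofReal (Real.exp (-(s^2)/(2*(v:ℝ)))) * gaussianReal (μ+s) v (Set.Ioi (μ+s)) := by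
        rw [lintegral_const_mul _ (measurable_gaussianPDF _ _), ← gaussianReal_apply _ hv]
    _ = ENNReal.ofReal (Real.exp (-(s^2)/(2*(v:ℝ))) * (1/2)) := by
        rw [gauss_Ioi_half _ hv, half_ennreal, ← ENNReal.ofReal_mul (Real.exp_nonneg _)]

lemma gauss_tail_neg (μ : ℝ) {v : NNReal} (hv : v ≠ 0) {s : ℝ} (hs : s ≤ 0) :
    gaussianReal μ v (Set.Ioi (μ + s)) ≤
      ENNReal.ofReal (1/2 + (-s) * (Real.sqrt (2*π*v))⁻¹) := by
  have hvpos : (0:ℝ) < v := lt_of_le_of_ne v.coe_nonneg (by exact_mod_cast (Ne.symm hv))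
  have hnn : (0:ℝ) ≤ (-s) * (Real.sqrt (2*π*v))⁻¹ :=
    mul_nonneg (neg_nonneg.mpr hs) (by positivity)
  have hsub : Set.Ioi (μ+s) ⊆ Set.Ioc (μ+s) μ ∪ Set.Ioi μ := by
    intro x hx
    rcases le_or_gt x μ with h | h
    · exact Or.inl ⟨hx, h⟩
    · exact Or.inr h
  refine le_trans (measure_mono hsub) (le_trans (measure_union_le _ _) ?_)
  have h1 : gaussianReal μ v (Set.Ioc (μ+s) μ) ≤ ENNReal.ofReal ((-s) * (Real.sqrt (2*π*v))⁻¹) := by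
    rw [gaussianReal_apply μ hv]
    calc ∫⁻ x in Set.Ioc (μ+s) μ, gaussianPDF μ v x
        ≤ ∫⁻ _ in Set.Ioc (μ+s) μ, ENNReal.ofReal ((Real.sqrt (2*π*v))⁻¹) := by
          apply setLIntegral_mono measurable_const
          intro x _
          apply ENNReal.ofReal_le_ofReal
          simp only [gaussianPDFReal]
          have h1 : rexp (-(x-μ)^2/(2*(v:ℝ))) ≤ 1 := by
            apply Real.exp_le_one_iff.mpr
            apply div_nonpos_of_nonpos_of_nonneg (neg_nonpos.mpr (sq_nonneg _)) (by positivity)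
          nlinarith [inv_nonneg.mpr (Real.sqrt_nonneg (2*π*(v:ℝ)))]
      _ = ENNReal.ofReal ((Real.sqrt (2*π*v))⁻¹) * volume (Set.Ioc (μ+s) μ) := by
          rw [setLIntegral_const]
      _ ≤ ENNReal.ofReal ((-s) * (Real.sqrt (2*π*v))⁻¹) := by
          rw [Real.volume_Ioc, ← ENNReal.ofReal_mul (by positivity)]
          apply ENNReal.ofReal_le_ofReal
          rw [show μ - (μ+s) = -s by ring]
          nlinarith [inv_nonneg.mpr (Real.sqrt_nonneg (2*π*(v:ℝ)))]
  have h2 : gaussianReal μ v (Set.Ioi μ) = 1/2 := gauss_Ioi_half μ hv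
  have h3 : ENNReal.ofReal (1/2 + (-s) * (Real.sqrt (2*π*(v:ℝ)))⁻¹)
      = 1/2 + ENNReal.ofReal ((-s) * (Real.sqrt (2*π*(v:ℝ)))⁻¹) := by
    rw [ENNReal.ofReal_add (by norm_num) hnn, ← half_ennreal]
  rw [h3, h2, add_comm]
  exact add_le_add le_rfl h1

lemma log_ge_one_sub_inv {x : ℝ} (hx : 0 < x) : 1 - 1/x ≤ Real.log x := by
  have h := Real.log_le_sub_one_of_pos (inv_pos.mpr hx)
  rw [Real.log_inv] at h
  rw [one_div]
  linarith

set_option maxHeartbeats 2000000 in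
theorem gauss_aux
    (σ2 : NNReal) (hσ : (0 : ℝ) < σ2)
    (μ₁ μ₂ Δ ε δ : ℝ)
    (hd : μ₂ < μ₁)
    (hΔ : |μ₁ - μ₂| ≤ Δ)
    (hε : ε ∈ Set.Ioo (0 : ℝ) 1) (hδ : δ ∈ Set.Ioo (0 : ℝ) 1)
    (hcal : (σ2 : ℝ) ≥ 2 * Real.log (1.25 / δ) * (Δ / ε) ^ 2) :
    ∀ T : Set ℝ, MeasurableSet T →
      gaussianReal μ₁ σ2 T ≤
        ENNReal.ofReal (Real.exp ε) * gaussianReal μ₂ σ2 T + ENNReal.ofReal δ := by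
  obtain ⟨hε0, hε1⟩ := hε
  obtain ⟨hδ0, hδ1⟩ := hδ
  have hvne : σ2 ≠ 0 := by
    intro h; rw [h] at hσ; simp at hσ
  have hd0 : (0:ℝ) < μ₁ - μ₂ := sub_pos.mpr hd
  have hdΔ : μ₁ - μ₂ ≤ Δ := le_trans (le_abs_self _) hΔ
  obtain ⟨L, hL⟩ : ∃ L, L = Real.log (1.25/δ) := ⟨_, rfl⟩
  rw [← hL] at hcal
  have hL02 : (1/5:ℝ) ≤ L := by
    have h := log_ge_one_sub_inv (show (0:ℝ) < 1.25/δ by positivity)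
    have h2 : 1/(1.25/δ) = δ/1.25 := by field_simp
    rw [h2, ← hL] at h
    norm_num at h
    linarith
  have hvd2 : 2*L*(μ₁-μ₂)^2 ≤ (σ2:ℝ)*ε^2 := by
    have h1 : (Δ/ε)^2 = Δ^2/ε^2 := div_pow Δ ε 2
    rw [h1] at hcal
    have h2 := mul_le_mul_of_nonneg_right hcal (sq_nonneg ε)
    have h3 : 2*L*(Δ^2/ε^2)*ε^2 = 2*L*Δ^2 := by field_simp
    rw [h3] at h2
    have hsq : (μ₁-μ₂)^2 ≤ Δ^2 := by nlinarith [hdΔ, hd0]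
    nlinarith [mul_le_mul_of_nonneg_left hsq (by linarith : (0:ℝ) ≤ 2*L), h2]
  obtain ⟨s, hs⟩ : ∃ s, s = (σ2:ℝ)*ε/(μ₁-μ₂) - (μ₁-μ₂)/2 := ⟨_, rfl⟩
  have hds : (μ₁-μ₂) * s = (σ2:ℝ)*ε - (μ₁-μ₂)^2/2 := by
    rw [hs]; field_simp
  have key2 : gaussianReal μ₁ σ2 (Set.Ioi (μ₁ + s)) ≤ ENNReal.ofReal δ := by
    rcases le_or_gt 0 s with hs0 | hs0
    · refine le_trans (gauss_tail μ₁ hvne hs0) (ENNReal.ofReal_le_ofReal ?_)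
      have hs2 : 2*L*(σ2:ℝ) - (σ2:ℝ)*ε + (μ₁-μ₂)^2/4 ≤ s^2 := by
        have h : (μ₁-μ₂)^2 * (2*L*(σ2:ℝ) - (σ2:ℝ)*ε + (μ₁-μ₂)^2/4) ≤ (μ₁-μ₂)^2 * s^2 := by
          have hds2 : ((μ₁-μ₂)*s)^2 = ((σ2:ℝ)*ε - (μ₁-μ₂)^2/2)^2 := by rw [hds]
          nlinarith [hds2, mul_le_mul_of_nonneg_left hvd2 hσ.le]
        exact le_of_mul_le_mul_left h (pow_pos hd0 2)
      have hlog25 : (3/5:ℝ) ≤ Real.log 2.5 := by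
        have h := log_ge_one_sub_inv (show (0:ℝ) < 2.5 by norm_num)
        norm_num at h
        linarith
      have hsum : L + Real.log 2 + Real.log δ = Real.log 2.5 := by
        rw [hL, Real.log_div (by norm_num) (ne_of_gt hδ0)]
        have h25 : Real.log 2.5 = Real.log 1.25 + Real.log 2 := by
          rw [← Real.log_mul (by norm_num) (by norm_num)]; norm_num
        linarith
      have hexp : -(s^2)/(2*(σ2:ℝ)) ≤ Real.log 2 + Real.log δ := by
        rw [div_le_iff₀ (by positivity)]
        have h7 : (σ2:ℝ)*(3/5:ℝ) ≤ (σ2:ℝ)*Real.log 2.5 := mul_le_mul_of_nonneg_left hlog25 hσ.le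
        have h8 : (σ2:ℝ)*ε ≤ (σ2:ℝ)*1 := mul_le_mul_of_nonneg_left hε1.le hσ.le
        have h9 : (Real.log 2 + Real.log δ) * (2*(σ2:ℝ))
            = (Real.log 2.5 - L) * (2*(σ2:ℝ)) := by
          rw [show Real.log 2 + Real.log δ = Real.log 2.5 - L by linarith]
        rw [h9]
        nlinarith [hs2, sq_nonneg (μ₁-μ₂)]
      have hfin : Real.exp (-(s^2)/(2*(σ2:ℝ))) ≤ 2*δ := by
        have h := Real.exp_le_exp.mpr hexp
        rwa [Real.exp_add, Real.exp_log (by norm_num : (0:ℝ) < 2), Real.exp_log hδ0] at h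
      linarith
    · refine le_trans (gauss_tail_neg μ₁ hvne hs0.le) (ENNReal.ofReal_le_ofReal ?_)
      have hd2 : 2*(σ2:ℝ)*ε < (μ₁-μ₂)^2 := by
        have := mul_neg_of_pos_of_neg hd0 hs0
        linarith [hds]
      have hLpos : (0:ℝ) < L := lt_of_lt_of_le (by norm_num) hL02
      have h4L : 4*L < ε := by
        have h10 : (4*L)*((σ2:ℝ)*ε) < ε*((σ2:ℝ)*ε) := by
          linarith [mul_lt_mul_of_pos_left hd2 hLpos, hvd2]
        exact lt_of_mul_lt_mul_right h10 (by positivity)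
      have hδbig : (15/16:ℝ) ≤ δ := by
        have hexpL : Real.exp (-L) = δ/1.25 := by
          rw [hL, Real.exp_neg, Real.exp_log (by positivity), inv_div]
        norm_num at hexpL
        have h1 : (3/4:ℝ) ≤ Real.exp (-(1:ℝ)/4) := by
          have := Real.add_one_le_exp (-(1:ℝ)/4); linarith
        have h2 : Real.exp (-(1:ℝ)/4) ≤ Real.exp (-L) := Real.exp_le_exp.mpr (by linarith)
        linarith
      have hX : (0:ℝ) < 2*π*(σ2:ℝ) := by positivity
      have hdX : (μ₁-μ₂)^2 ≤ (49/64)*(2*π*(σ2:ℝ)) := by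
        have hε2 : ε^2 ≤ 1 := by nlinarith [hε0, hε1]
        have h11 : (σ2:ℝ)*ε^2 ≤ (σ2:ℝ)*1 := mul_le_mul_of_nonneg_left hε2 hσ.le
        have h12 : (2/5:ℝ)*(μ₁-μ₂)^2 ≤ 2*L*(μ₁-μ₂)^2 := by nlinarith [hL02, sq_nonneg (μ₁-μ₂)]
        have h13 : 3*(σ2:ℝ) ≤ π*(σ2:ℝ) := mul_le_mul_of_nonneg_right Real.pi_gt_three.le hσ.le
        linarith
      have hdsqrt : μ₁-μ₂ ≤ (7/8) * Real.sqrt (2*π*(σ2:ℝ)) := by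
        have h2 : Real.sqrt ((μ₁-μ₂)^2) ≤ Real.sqrt ((49/64)*(2*π*(σ2:ℝ))) :=
          Real.sqrt_le_sqrt hdX
        rw [Real.sqrt_sq hd0.le] at h2
        rwa [show ((49:ℝ)/64) = (7/8)^2 by norm_num,
          Real.sqrt_mul (by positivity) _, Real.sqrt_sq (by norm_num)] at h2
      have hss : -s ≤ (μ₁-μ₂)/2 := by
        have h : (μ₁-μ₂) * (-s) ≤ (μ₁-μ₂) * ((μ₁-μ₂)/2) := by nlinarith [hds, mul_pos hσ hε0]
        exact le_of_mul_le_mul_left h hd0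
      have hsqrtpos : (0:ℝ) < Real.sqrt (2*π*(σ2:ℝ)) := Real.sqrt_pos.mpr hX
      have hfrac : (-s) * (Real.sqrt (2*π*(σ2:ℝ)))⁻¹ ≤ 7/16 := by
        have h1 : -s ≤ (7/16) * Real.sqrt (2*π*(σ2:ℝ)) := by linarith
        calc (-s) * (Real.sqrt (2*π*(σ2:ℝ)))⁻¹
            ≤ ((7/16) * Real.sqrt (2*π*(σ2:ℝ))) * (Real.sqrt (2*π*(σ2:ℝ)))⁻¹ :=
              mul_le_mul_of_nonneg_right h1 (by positivity)
          _ = 7/16 := by field_simp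
      linarith
  have key1 : ∀ x : ℝ, x ∉ Set.Ioi (μ₁ + s) →
      gaussianPDF μ₁ σ2 x ≤ ENNReal.ofReal (Real.exp ε) * gaussianPDF μ₂ σ2 x := by
    intro x hx
    have hxle : x ≤ μ₁ + s := not_lt.mp hx
    rw [gaussianPDF, gaussianPDF, ← ENNReal.ofReal_mul (Real.exp_nonneg _)]
    apply ENNReal.ofReal_le_ofReal
    simp only [gaussianPDFReal]
    have hexp : rexp (-(x-μ₁)^2/(2*(σ2:ℝ))) ≤ Real.exp ε * rexp (-(x-μ₂)^2/(2*(σ2:ℝ))) := by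
      rw [← Real.exp_add]
      apply Real.exp_le_exp.mpr
      have hkey : (x-μ₂)^2 - (x-μ₁)^2 ≤ 2*(σ2:ℝ)*ε := by
        have hm := mul_le_mul_of_nonneg_left (show x - μ₁ ≤ s by linarith) hd0.le
        linarith [hds, hm]
      have hεeq : ε = (2*(σ2:ℝ)*ε)/(2*(σ2:ℝ)) := by field_simp
      rw [hεeq, ← add_div, div_le_div_iff₀ (by positivity) (by positivity)]
      nlinarith [mul_le_mul_of_nonneg_right hkey (by positivity : (0:ℝ) ≤ 2*(σ2:ℝ))]
    have hC : (0:ℝ) ≤ (Real.sqrt (2*π*(σ2:ℝ)))⁻¹ := by positivity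
    linarith [mul_le_mul_of_nonneg_left hexp hC]
  intro T hT
  have hTsplit : gaussianReal μ₁ σ2 T ≤
      gaussianReal μ₁ σ2 (T \ Set.Ioi (μ₁+s)) + gaussianReal μ₁ σ2 (Set.Ioi (μ₁+s)) := by
    refine le_trans (measure_mono ?_) (measure_union_le _ _)
    intro x hx
    by_cases h : x ∈ Set.Ioi (μ₁+s)
    · exact Or.inr h
    · exact Or.inl ⟨hx, h⟩
  have hmain : gaussianReal μ₁ σ2 (T \ Set.Ioi (μ₁+s)) ≤
      ENNReal.ofReal (Real.exp ε) * gaussianReal μ₂ σ2 T := by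
    rw [gaussianReal_apply μ₁ hvne, gaussianReal_apply μ₂ hvne]
    calc ∫⁻ x in T \ Set.Ioi (μ₁+s), gaussianPDF μ₁ σ2 x
        ≤ ∫⁻ x in T \ Set.Ioi (μ₁+s), ENNReal.ofReal (Real.exp ε) * gaussianPDF μ₂ σ2 x :=
          setLIntegral_mono ((measurable_gaussianPDF _ _).const_mul _) (fun x hx => key1 x hx.2)
      _ = ENNReal.ofReal (Real.exp ε) * ∫⁻ x in T \ Set.Ioi (μ₁+s), gaussianPDF μ₂ σ2 x :=
          lintegral_const_mul _ (measurable_gaussianPDF _ _)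
      _ ≤ ENNReal.ofReal (Real.exp ε) * ∫⁻ x in T, gaussianPDF μ₂ σ2 x := by
          gcongr
          exact Set.diff_subset
  exact le_trans hTsplit (add_le_add hmain key2)

/-- Gaussian mechanism core privacy inequality. -/
theorem gaussian_mechanism_privacy
    (σ2 : NNReal) (hσ : (0 : ℝ) < σ2)
    (μ₁ μ₂ Δ ε δ : ℝ)
    (hΔ : |μ₁ - μ₂| ≤ Δ)
    (hε : ε ∈ Set.Ioo (0 : ℝ) 1) (hδ : δ ∈ Set.Ioo (0 : ℝ) 1)
    (hcal : (σ2 : ℝ) ≥ 2 * Real.log (1.25 / δ) * (Δ / ε) ^ 2) :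
    ∀ T : Set ℝ, MeasurableSet T →
      gaussianReal μ₁ σ2 T ≤
        ENNReal.ofReal (Real.exp ε) * gaussianReal μ₂ σ2 T + ENNReal.ofReal δ := by
  intro T hT
  rcases lt_trichotomy μ₂ μ₁ with h | h | h
  · exact gauss_aux σ2 hσ μ₁ μ₂ Δ ε δ h hΔ hε hδ hcal T hT
  · subst h
    have h1 : (1:ℝ≥0∞) ≤ ENNReal.ofReal (Real.exp ε) := by
      rw [ENNReal.one_le_ofReal]
      exact Real.one_le_exp hε.1.le
    calc gaussianReal μ₂ σ2 T ≤ ENNReal.ofReal (Real.exp ε) * gaussianReal μ₂ σ2 T :=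
          le_mul_of_one_le_left zero_le h1
      _ ≤ _ := le_self_add
  · have hT' : MeasurableSet ((fun x : ℝ => -x) ⁻¹' T) := hT.preimage measurable_neg
    rw [gauss_symm μ₁ σ2 hT, gauss_symm μ₂ σ2 hT]
    refine gauss_aux σ2 hσ (-μ₁) (-μ₂) Δ ε δ (by linarith) ?_ hε hδ hcal _ hT'
    rw [show -μ₁ - -μ₂ = -(μ₁ - μ₂) by ring, abs_neg]
    exact hΔ
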